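/- Let n ≥ 4, let π be any set partition of [n], and let a, b be real numbers with 0 < a < b < 2a. Then the partition valuation v^{π,a,b} is a gross substitutes valuation on [n]. -/

import Mathlib

open Finset

variable {α : Type*} [DecidableEq α]

/-- A valuation on ground set `E`: zero at the empty set, non-negative,
and monotone on subsets of `E`. -/
def IsValuation (E : Finset α) (u : Finset α → ℝ) : Prop :=
  u ∅ = 0 ∧ (∀ S : Finset α, S ⊆ E → 0 ≤ u S) ∧
    ∀ ⦃S T : Finset α⦄, S ⊆ T → T ⊆ E → u S ≤ u T

/-- Gross substitutes valuation on ground set `E`: a valuation satisfying the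
M♮-exchange property. -/
def GrossSubstitutes (E : Finset α) (u : Finset α → ℝ) : Prop :=
  IsValuation E u ∧
    ∀ ⦃S T : Finset α⦄, S ⊆ E → T ⊆ E → ∀ i ∈ S \ T,
      u S + u T ≤ u (S.erase i) + u (insert i T) ∨
        ∃ j ∈ T \ S,
          u S + u T ≤ u (insert j (S.erase i)) + u ((insert i T).erase j)

/-- The merge (convolution) of a valuation `u1` on `E1` and `u2` on `E2`:
`(u1 * u2)(S) = max { u1 S1 + u2 S2 : S = S1 ∪ S2, S1 ∩ S2 = ∅, S1 ⊆ E1, S2 ⊆ E2 }`. -/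
noncomputable def mergeVal (E1 E2 : Finset α) (u1 u2 : Finset α → ℝ)
    (S : Finset α) : ℝ :=
  sSup {x : ℝ | ∃ S1 S2 : Finset α, S = S1 ∪ S2 ∧ Disjoint S1 S2 ∧
    S1 ⊆ E1 ∧ S2 ⊆ E2 ∧ x = u1 S1 + u2 S2}

/-- The partition valuation `v^{π,a,b}`: value `0` at `∅`, value `a` on nonempty
sets contained in a single part of `π`, and value `b` otherwise. -/
noncomputable def partitionVal {E : Finset α} (π : Finpartition E) (a b : ℝ)
    (I : Finset α) : ℝ :=
  if I = ∅ then 0 else if ∃ p ∈ π.parts, I ⊆ p then a else b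

section helpers

variable {n : ℕ} {π : Finpartition (Finset.univ : Finset (Fin n))} {a b : ℝ}

lemma pv_empty : partitionVal π a b ∅ = 0 := by simp [partitionVal]

lemma pv_eq_a {I : Finset (Fin n)} (hI : I ≠ ∅) (h : ∃ p ∈ π.parts, I ⊆ p) :
    partitionVal π a b I = a := by rw [partitionVal, if_neg hI, if_pos h]

lemma pv_eq_b {I : Finset (Fin n)} (hI : I ≠ ∅) (h : ¬ ∃ p ∈ π.parts, I ⊆ p) :
    partitionVal π a b I = b := by rw [partitionVal, if_neg hI, if_neg h]

lemma pv_nonneg (ha : 0 < a) (hab : a < b) (I : Finset (Fin n)) :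
    0 ≤ partitionVal π a b I := by
  rw [partitionVal]; split_ifs <;> linarith

lemma pv_le_b (ha : 0 < a) (hab : a < b) (I : Finset (Fin n)) :
    partitionVal π a b I ≤ b := by
  rw [partitionVal]; split_ifs <;> linarith

lemma pv_ge_a (hab : a < b) {I : Finset (Fin n)} (hI : I ≠ ∅) :
    a ≤ partitionVal π a b I := by
  rw [partitionVal, if_neg hI]; split_ifs <;> linarith

lemma pv_singleton (x : Fin n) : partitionVal π a b {x} = a := by
  obtain ⟨p, hp, hx⟩ := π.exists_mem (mem_univ x)
  exact pv_eq_a (by simp) ⟨p, hp, singleton_subset_iff.mpr hx⟩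

lemma pv_mono (ha : 0 < a) (hab : a < b) {S T : Finset (Fin n)} (hST : S ⊆ T) :
    partitionVal π a b S ≤ partitionVal π a b T := by
  by_cases hS : S = ∅
  · rw [hS, pv_empty]; exact pv_nonneg ha hab T
  · have hT : T ≠ ∅ := fun h => hS (subset_empty.mp (h ▸ hST))
    by_cases h1 : ∃ p ∈ π.parts, T ⊆ p
    · obtain ⟨p, hp, hTp⟩ := h1
      rw [pv_eq_a hS ⟨p, hp, hST.trans hTp⟩, pv_eq_a hT ⟨p, hp, hTp⟩]
    · rw [pv_eq_b hT h1]; exact pv_le_b ha hab S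

end helpers

/-- For `n ≥ 4`, every partition valuation `v^{π,a,b}` with `0 < a < b < 2a`
is a gross substitutes valuation on `[n]`. -/
theorem partitionVal_grossSubstitutes (n : ℕ) (hn : 4 ≤ n)
    (π : Finpartition (Finset.univ : Finset (Fin n))) (a b : ℝ)
    (ha : 0 < a) (hab : a < b) (hb : b < 2 * a) :
    GrossSubstitutes (Finset.univ : Finset (Fin n)) (partitionVal π a b) := by
  classical
  refine ⟨⟨pv_empty, fun S _ => pv_nonneg ha hab S, fun S T hST _ => pv_mono ha hab hST⟩, ?_⟩
  intro S T _ _ i hi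
  rw [mem_sdiff] at hi
  obtain ⟨hiS, hiT⟩ := hi
  have hSne : S ≠ ∅ := ne_empty_of_mem hiS
  obtain ⟨p, hp, hip⟩ := π.exists_mem (mem_univ i)
  have hT'ne : insert i T ≠ ∅ := ne_empty_of_mem (mem_insert_self i T)
  by_cases hS1 : ∃ q ∈ π.parts, S ⊆ q
  · -- v S = a
    have hvS : partitionVal π a b S = a := pv_eq_a hSne hS1
    by_cases hS' : S.erase i = ∅
    · -- S = {i}
      have hSsub : ∀ x ∈ S, x = i := fun x hx => by
        by_contra hne
        exact (eq_empty_iff_forall_notMem.mp hS' x) (mem_erase.mpr ⟨hne, hx⟩)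
      by_cases hT0 : T = ∅
      · left
        rw [hT0, hS', pv_empty, insert_empty_eq, pv_singleton, hvS]
        linarith
      · by_cases hT1 : ∃ r ∈ π.parts, T ⊆ r
        · -- vT = a : any j ∈ T works
          obtain ⟨j, hjT⟩ := nonempty_of_ne_empty hT0
          have hji : j ≠ i := fun e => hiT (e ▸ hjT)
          have hjS : j ∉ S := fun h => hji (hSsub j h)
          right
          refine ⟨j, mem_sdiff.mpr ⟨hjT, hjS⟩, ?_⟩
          rw [hS', insert_empty_eq, pv_singleton, hvS, pv_eq_a hT0 hT1]
          have hmem : i ∈ (insert i T).erase j :=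
            mem_erase.mpr ⟨hji.symm, mem_insert_self i T⟩
          have h2 : a ≤ partitionVal π a b ((insert i T).erase j) :=
            pv_ge_a hab (ne_empty_of_mem hmem)
          linarith
        · -- vT = b : hard case 1b
          obtain ⟨x, hxT⟩ := nonempty_of_ne_empty hT0
          obtain ⟨px, hpx, hxpx⟩ := π.exists_mem (mem_univ x)
          obtain ⟨y, hyT, hypx⟩ := not_subset.mp (fun h => hT1 ⟨px, hpx, h⟩)
          have hjz : ∃ j ∈ T, ∃ z ∈ T, z ≠ j ∧ z ∉ p := by
            by_cases hyp : y ∈ p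
            · -- then x ∉ p
              have hxp : x ∉ p := fun hxp =>
                hypx ((π.eq_of_mem_parts hp hpx hxp hxpx) ▸ hyp)
              exact ⟨y, hyT, x, hxT, fun e => hypx (e ▸ hxpx), hxp⟩
            · exact ⟨x, hxT, y, hyT, fun e => hypx (e ▸ hxpx), hyp⟩
          obtain ⟨j, hjT, z, hzT, hzj, hzp⟩ := hjz
          have hji : j ≠ i := fun e => hiT (e ▸ hjT)
          have hjS : j ∉ S := fun h => hji (hSsub j h)
          right
          refine ⟨j, mem_sdiff.mpr ⟨hjT, hjS⟩, ?_⟩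
          have h2 : partitionVal π a b ((insert i T).erase j) = b := by
            apply pv_eq_b (ne_empty_of_mem (mem_erase.mpr ⟨hji.symm, mem_insert_self i T⟩))
            rintro ⟨r, hr, hsub⟩
            have hri : r = p :=
              π.eq_of_mem_parts hr hp (hsub (mem_erase.mpr ⟨hji.symm, mem_insert_self i T⟩)) hip
            exact hzp (hri ▸ hsub (mem_erase.mpr ⟨hzj, mem_insert_of_mem hzT⟩))
          rw [hS', insert_empty_eq, pv_singleton, hvS, pv_eq_b hT0 hT1, h2]
    · -- S' ≠ ∅
      left
      obtain ⟨q, hq, hSq⟩ := hS1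
      have hvS' : partitionVal π a b (S.erase i) = a :=
        pv_eq_a hS' ⟨q, hq, (erase_subset i S).trans hSq⟩
      have hmono := pv_mono (π := π) ha hab (subset_insert i T)
      rw [hvS, hvS']
      linarith
  · -- v S = b
    have hvS : partitionVal π a b S = b := pv_eq_b hSne hS1
    have hS' : S.erase i ≠ ∅ := by
      intro h
      apply hS1
      refine ⟨p, hp, fun x hx => ?_⟩
      have hxi : x = i := by
        by_contra hne
        exact (eq_empty_iff_forall_notMem.mp h x) (mem_erase.mpr ⟨hne, hx⟩)
      exact hxi ▸ hip
    by_cases hS'1 : ∃ q ∈ π.parts, S.erase i ⊆ q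
    · obtain ⟨q, hq, hS'q⟩ := hS'1
      have hvS' : partitionVal π a b (S.erase i) = a := pv_eq_a hS' ⟨q, hq, hS'q⟩
      obtain ⟨s, hs⟩ := nonempty_of_ne_empty hS'
      have hiq : i ∉ q := by
        intro h
        apply hS1
        refine ⟨q, hq, fun x hx => ?_⟩
        by_cases hxi : x = i
        · exact hxi ▸ h
        · exact hS'q (mem_erase.mpr ⟨hxi, hx⟩)
      have hpq : p ≠ q := fun h => hiq (h ▸ hip)
      by_cases hT0 : T = ∅
      · left
        rw [hT0, pv_empty, hvS, hvS', insert_empty_eq, pv_singleton]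
        linarith
      · by_cases hT1 : ∃ r ∈ π.parts, T ⊆ r
        · by_cases hT'1 : ∃ r ∈ π.parts, insert i T ⊆ r
          · -- case 2a
            obtain ⟨r, hr, hT'r⟩ := hT'1
            have hrp : r = p := π.eq_of_mem_parts hr hp (hT'r (mem_insert_self i T)) hip
            have hTp : T ⊆ p := hrp ▸ (subset_insert i T).trans hT'r
            obtain ⟨j, hjT⟩ := nonempty_of_ne_empty hT0
            have hji : j ≠ i := fun e => hiT (e ▸ hjT)
            have hjq : j ∉ q := fun h => hpq (π.eq_of_mem_parts hp hq (hTp hjT) h)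
            have hjS : j ∉ S := fun h => hjq (hS'q (mem_erase.mpr ⟨hji, h⟩))
            right
            refine ⟨j, mem_sdiff.mpr ⟨hjT, hjS⟩, ?_⟩
            have h1 : partitionVal π a b (insert j (S.erase i)) = b := by
              apply pv_eq_b (ne_empty_of_mem (mem_insert_self j _))
              rintro ⟨r', hr', hsub⟩
              have hr'q : r' = q :=
                π.eq_of_mem_parts hr' hq (hsub (mem_insert_of_mem hs)) (hS'q hs)
              exact hjq (hr'q ▸ hsub (mem_insert_self j _))
            have h2 : partitionVal π a b ((insert i T).erase j) = a := by
              apply pv_eq_a (ne_empty_of_mem (mem_erase.mpr ⟨hji.symm, mem_insert_self i T⟩))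
              refine ⟨p, hp, fun x hx => ?_⟩
              rcases mem_insert.mp (mem_of_mem_erase hx) with hxi | hxT
              · exact hxi ▸ hip
              · exact hTp hxT
            rw [hvS, pv_eq_a hT0 hT1, h1, h2]
          · left
            rw [hvS, pv_eq_a hT0 hT1, hvS', pv_eq_b hT'ne hT'1]
            linarith
        · -- case 2b
          obtain ⟨t1, ht1T, ht1q⟩ := not_subset.mp (fun h => hT1 ⟨q, hq, h⟩)
          have hjchoice : ∃ j ∈ T, j ∉ q ∧ ∃ z ∈ T, z ≠ j ∧ z ∉ p := by
            by_cases hcase : ∃ z ∈ T, z ∉ p ∧ z ≠ t1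
            · obtain ⟨z, hzT, hzp, hzt⟩ := hcase
              exact ⟨t1, ht1T, ht1q, z, hzT, hzt, hzp⟩
            · push_neg at hcase
              have ht1p : t1 ∉ p := by
                obtain ⟨t2, ht2T, ht2p⟩ := not_subset.mp (fun h => hT1 ⟨p, hp, h⟩)
                have h21 : t2 = t1 := hcase t2 ht2T ht2p
                exact h21 ▸ ht2p
              have hTe : T.erase t1 ≠ ∅ := by
                intro h
                apply hT1
                obtain ⟨pt, hpt, ht1pt⟩ := π.exists_mem (mem_univ t1)
                refine ⟨pt, hpt, fun x hx => ?_⟩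
                have hxt : x = t1 := by
                  by_contra hne
                  exact (eq_empty_iff_forall_notMem.mp h x) (mem_erase.mpr ⟨hne, hx⟩)
                exact hxt ▸ ht1pt
              obtain ⟨j, hj⟩ := nonempty_of_ne_empty hTe
              rw [mem_erase] at hj
              have hjp : j ∈ p := by
                by_contra h
                exact hj.1 (hcase j hj.2 h)
              have hjq : j ∉ q := fun h => hpq (π.eq_of_mem_parts hp hq hjp h)
              exact ⟨j, hj.2, hjq, t1, ht1T, fun e => hj.1 e.symm, ht1p⟩
          obtain ⟨j, hjT, hjq, z, hzT, hzj, hzp⟩ := hjchoice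
          have hji : j ≠ i := fun e => hiT (e ▸ hjT)
          have hjS : j ∉ S := fun h => hjq (hS'q (mem_erase.mpr ⟨hji, h⟩))
          right
          refine ⟨j, mem_sdiff.mpr ⟨hjT, hjS⟩, ?_⟩
          obtain ⟨s, hs⟩ := nonempty_of_ne_empty hS'
          have h1 : partitionVal π a b (insert j (S.erase i)) = b := by
            apply pv_eq_b (ne_empty_of_mem (mem_insert_self j _))
            rintro ⟨r', hr', hsub⟩
            have hr'q : r' = q :=
              π.eq_of_mem_parts hr' hq (hsub (mem_insert_of_mem hs)) (hS'q hs)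
            exact hjq (hr'q ▸ hsub (mem_insert_self j _))
          have h2 : partitionVal π a b ((insert i T).erase j) = b := by
            apply pv_eq_b (ne_empty_of_mem (mem_erase.mpr ⟨hji.symm, mem_insert_self i T⟩))
            rintro ⟨r', hr', hsub⟩
            have hr'p : r' = p :=
              π.eq_of_mem_parts hr' hp (hsub (mem_erase.mpr ⟨hji.symm, mem_insert_self i T⟩)) hip
            exact hzp (hr'p ▸ hsub (mem_erase.mpr ⟨hzj, mem_insert_of_mem hzT⟩))
          rw [hvS, pv_eq_b hT0 hT1, h1, h2]
    · -- vS' = b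
      left
      rw [hvS, pv_eq_b hS' hS'1]
      have hmono := pv_mono (π := π) ha hab (subset_insert i T)
      linarith
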